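/- Let Q be a finite graded poset of rank r with |Q| = d. Then the dilation (r+2)·𝒪(Q) of the order polytope of Q is a lattice translate of a reflexive polytope; i.e. there exists a lattice point v ∈ ℤ^d such that (r+2)·𝒪(Q) − v is a reflexive polytope. -/

import Mathlib

open scoped Pointwise
open Filter MeasureTheory

variable {ι : Type*} [Fintype ι]

/-- `P ⊆ ℝ^ι` is a lattice polytope: the convex hull of finitely many points of `ℤ^ι`. -/
def IsLatticePolytope (P : Set (ι → ℝ)) : Prop :=
  ∃ V : Finset (ι → ℤ),
    P = convexHull ℝ ((fun v : ι → ℤ => fun i => (v i : ℝ)) '' (V : Set (ι → ℤ)))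

/-- The number of lattice points in the `m`-th dilation of `P`. -/
noncomputable def latticeCount (P : Set (ι → ℝ)) (m : ℕ) : ℕ :=
  Set.ncard {x : ι → ℤ | (fun i => (x i : ℝ)) ∈ (m : ℝ) • P}

/-- The number of lattice points on the boundary of the `m`-th dilation of `P`
(with the convention that this is `1` for `m = 0`). -/
noncomputable def boundaryCount (P : Set (ι → ℝ)) (m : ℕ) : ℕ :=
  if m = 0 then 1 else
    Set.ncard {x : ι → ℤ | (fun i => (x i : ℝ)) ∈ frontier ((m : ℝ) • P)}

/-- `P` is reflexive: a lattice polytope containing the origin in its interior whose dual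
polytope `P^∨ = {u : ⟨u,v⟩ ≤ 1 ∀ v ∈ P}` is again a lattice polytope. -/
def IsReflexive (P : Set (ι → ℝ)) : Prop :=
  IsLatticePolytope P ∧ 0 ∈ interior P ∧
    IsLatticePolytope {u : ι → ℝ | ∀ v ∈ P, ∑ i, u i * v i ≤ 1}

/-- The order polytope `𝒪(Q) ⊆ ℝ^Q` of a finite poset `Q`: all order-preserving maps
`Q → [0,1]`. -/
def orderPolytope (Q : Type*) [PartialOrder Q] : Set (Q → ℝ) :=
  {f | (∀ x, 0 ≤ f x ∧ f x ≤ 1) ∧ ∀ x y, x ≤ y → f x ≤ f y}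

/-- `e(Q)`: the number of linear extensions of `Q`, i.e. bijective order-preserving maps
from `Q` to the chain with `|Q|` elements. -/
noncomputable def linExtCount (Q : Type*) [Fintype Q] [PartialOrder Q] : ℕ :=
  Set.ncard {f : Q → Fin (Fintype.card Q) | Monotone f ∧ Function.Bijective f}

/-- `e_s(Q)`: the number of surjective order-preserving maps from `Q` to the chain with `s`
elements. -/
noncomputable def surjOrderPresCount (Q : Type*) [Fintype Q] [PartialOrder Q] (s : ℕ) : ℕ :=
  Set.ncard {f : Q → Fin s | Monotone f ∧ Function.Surjective f}

/-- `Q` is graded of rank `r`: every maximal chain of `Q` has length `r`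
(i.e. has `r + 1` elements). -/
def IsGradedOfRank (Q : Type*) [PartialOrder Q] (r : ℕ) : Prop :=
  ∀ C : Set Q, IsMaxChain (· ≤ ·) C → C.ncard = r + 1

set_option linter.unusedSectionVars false
section Aux

variable {Q : Type*} [Fintype Q] [PartialOrder Q]

/-- A finite chain ending at `x`. -/
def IsChainTo (x : Q) (C : Finset Q) : Prop :=
  x ∈ C ∧ (∀ y ∈ C, y ≤ x) ∧ IsChain (· ≤ ·) (C : Set Q)

/-- height: size of longest chain ending at `x`. -/
noncomputable def hgt (x : Q) : ℕ :=
  sSup {n | ∃ C : Finset Q, IsChainTo x C ∧ C.card = n}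

lemma hgt_bddAbove (x : Q) : BddAbove {n | ∃ C : Finset Q, IsChainTo x C ∧ C.card = n} :=
  ⟨Fintype.card Q, fun n hn => by obtain ⟨C, _, rfl⟩ := hn; exact Finset.card_le_univ C⟩

lemma isChainTo_singleton (x : Q) : IsChainTo x {x} :=
  ⟨Finset.mem_singleton_self x, fun y hy => le_of_eq (Finset.mem_singleton.mp hy),
   by simp [Set.subsingleton_singleton.isChain]⟩

lemma le_hgt {x : Q} {C : Finset Q} (hC : IsChainTo x C) : C.card ≤ hgt x :=
  le_csSup (hgt_bddAbove x) ⟨C, hC, rfl⟩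

lemma one_le_hgt (x : Q) : 1 ≤ hgt x := by
  simpa using le_hgt (isChainTo_singleton x)

lemma exists_hgt_chain (x : Q) : ∃ C : Finset Q, IsChainTo x C ∧ C.card = hgt x := by
  have hne : {n | ∃ C : Finset Q, IsChainTo x C ∧ C.card = n}.Nonempty :=
    ⟨1, {x}, isChainTo_singleton x, Finset.card_singleton x⟩
  exact Nat.sSup_mem hne (hgt_bddAbove x)

lemma hgt_strictMono {x y : Q} (h : x < y) : hgt x < hgt y := by
  classical
  obtain ⟨C, ⟨hxC, hle, hch⟩, hcard⟩ := exists_hgt_chain x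
  have hyC : y ∉ C := fun hy => absurd (lt_of_lt_of_le h (hle y hy)) (lt_irrefl x)
  have hchain : IsChainTo y (insert y C) := by
    refine ⟨Finset.mem_insert_self y C, ?_, ?_⟩
    · intro z hz
      rcases Finset.mem_insert.mp hz with rfl | hz
      · exact le_rfl
      · exact le_of_lt (lt_of_le_of_lt (hle z hz) h)
    · rw [Finset.coe_insert]
      exact hch.insert (fun b hb _ => Or.inr (le_of_lt (lt_of_le_of_lt (hle b hb) h)))
  have := le_hgt hchain
  rw [Finset.card_insert_of_notMem hyC, hcard] at this
  omega

lemma exists_down {x : Q} (hx : 2 ≤ hgt x) : ∃ y, y < x ∧ hgt y + 1 = hgt x := by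
  classical
  obtain ⟨C, ⟨hxC, hle, hch⟩, hcard⟩ := exists_hgt_chain x
  set C' := C.erase x with hC'
  have hcard' : C'.card = hgt x - 1 := by rw [hC', Finset.card_erase_of_mem hxC, hcard]
  have hne : C'.Nonempty := Finset.card_pos.mp (by omega)
  obtain ⟨m, hmC', hmax⟩ := C'.exists_maximal hne
  have hmC : m ∈ C := Finset.mem_of_mem_erase hmC'
  have hmx : m < x := lt_of_le_of_ne (hle m hmC) (Finset.ne_of_mem_erase hmC')
  have hub : ∀ z ∈ C', z ≤ m := by
    intro z hz
    rcases eq_or_ne z m with rfl | hzm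
    · exact le_rfl
    rcases hch (Finset.mem_coe.mpr (Finset.mem_of_mem_erase hz))
        (Finset.mem_coe.mpr hmC) (by exact_mod_cast hzm) with h | h
    · exact h
    · exact absurd (lt_of_le_of_ne h (Ne.symm hzm)) (fun hlt => absurd (hmax hz hlt.le) (not_le_of_gt hlt))
  have hchain' : IsChainTo m C' := by
    refine ⟨hmC', hub, ?_⟩
    exact hch.mono (by simp [hC', Finset.coe_subset.mpr (Finset.erase_subset x C)])
  have h1 := le_hgt hchain'
  have h2 := hgt_strictMono hmx
  exact ⟨m, hmx, by omega⟩


variable {r : ℕ}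

lemma chain_card_le (hQ : IsGradedOfRank Q r) {E : Finset Q}
    (hE : IsChain (· ≤ ·) (E : Set Q)) : E.card ≤ r + 1 := by
  obtain ⟨M, hM, hsub⟩ := hE.exists_maxChain
  have h1 : (E : Set Q).ncard ≤ M.ncard := Set.ncard_le_ncard hsub (Set.toFinite M)
  rw [hQ M hM] at h1
  simpa using h1

lemma hgt_le (hQ : IsGradedOfRank Q r) (x : Q) : hgt x ≤ r + 1 := by
  obtain ⟨C, hC, hcard⟩ := exists_hgt_chain x
  rw [← hcard]; exact chain_card_le hQ hC.2.2

lemma exists_succ_aux (hQ : IsGradedOfRank Q r) {x : Q} {M : Set Q}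
    (hM : IsMaxChain (· ≤ ·) M) (hx : x ∈ M) (hB : ∃ w ∈ M, x < w) :
    ∃ z, x < z ∧ (∀ w ∈ M, x < w → z ≤ w) ∧ hgt z = hgt x + 1 := by
  classical
  have hMfin : M.Finite := Set.toFinite M
  set MF := hMfin.toFinset with hMF
  have hmem : ∀ w, w ∈ MF ↔ w ∈ M := fun w => hMfin.mem_toFinset
  have hcM : MF.card = r + 1 := by
    rw [← Set.ncard_eq_toFinset_card M hMfin, hQ M hM]
  have hxMF : x ∈ MF := (hmem x).mpr hx
  have hcomp : ∀ w ∈ MF, w ≤ x ∨ x < w := by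
    intro w hw
    rcases eq_or_ne w x with rfl | hne
    · exact Or.inl le_rfl
    rcases hM.1 ((hmem w).mp hw) hx hne with h | h
    · exact Or.inl h
    · exact Or.inr (lt_of_le_of_ne h (Ne.symm hne))
  set A := MF.filter (fun w => w ≤ x) with hA
  set B := MF.filter (fun w => x < w) with hB'
  have hABcard : A.card + B.card = r + 1 := by
    have : B = MF.filter (fun w => ¬ w ≤ x) := by
      apply Finset.filter_congr
      intro w hw
      constructor
      · intro hlt hle; exact absurd (lt_of_lt_of_le hlt hle) (lt_irrefl x)
      · intro hle; rcases hcomp w hw with h | h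
        · exact absurd h hle
        · exact h
    rw [this, Finset.card_filter_add_card_filter_not, hcM]
  have hAchain : IsChainTo x A := by
    refine ⟨Finset.mem_filter.mpr ⟨hxMF, le_rfl⟩, fun y hy => (Finset.mem_filter.mp hy).2, ?_⟩
    refine IsChain.mono ?_ hM.1
    intro w hw
    rw [Finset.mem_coe, Finset.mem_filter] at hw
    exact (hmem w).mp hw.1
  have hAcard : A.card ≤ hgt x := le_hgt hAchain
  have hBne : B.Nonempty := by
    obtain ⟨w, hwM, hxw⟩ := hB
    exact ⟨w, Finset.mem_filter.mpr ⟨(hmem w).mpr hwM, hxw⟩⟩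
  obtain ⟨z, hzB, hzmin⟩ := B.exists_minimal hBne
  have hxz : x < z := (Finset.mem_filter.mp hzB).2
  have hzle : ∀ w ∈ B, z ≤ w := by
    intro w hw
    rcases eq_or_ne w z with rfl | hne
    · exact le_rfl
    rcases hM.1 ((hmem w).mp (Finset.mem_filter.mp hw).1)
        ((hmem z).mp (Finset.mem_filter.mp hzB).1) hne with h | h
    · exact absurd (lt_of_le_of_ne h hne) (fun hlt => absurd (hzmin hw hlt.le) (not_le_of_gt hlt))
    · exact h
  set B2 := MF.filter (fun w => z < w) with hB2
  have hBins : B = insert z B2 := by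
    ext w
    simp only [Finset.mem_insert]
    constructor
    · intro hw
      rcases eq_or_ne w z with rfl | hne
      · exact Or.inl rfl
      · exact Or.inr (Finset.mem_filter.mpr ⟨(Finset.mem_filter.mp hw).1,
          lt_of_le_of_ne (hzle w hw) (Ne.symm hne)⟩)
    · rintro (rfl | hw)
      · exact hzB
      · exact Finset.mem_filter.mpr ⟨(Finset.mem_filter.mp hw).1,
          lt_trans hxz (Finset.mem_filter.mp hw).2⟩
  have hzB2 : z ∉ B2 := by
    simp only [hB2, Finset.mem_filter]
    rintro ⟨-, h⟩; exact absurd h (lt_irrefl z)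
  have hBcard : B.card = B2.card + 1 := by
    rw [hBins, Finset.card_insert_of_notMem hzB2]
  obtain ⟨D, hD, hDcard⟩ := exists_hgt_chain z
  have hdisj : Disjoint D B2 := by
    rw [Finset.disjoint_left]
    intro d hdD hdB2
    have h1 : d ≤ z := hD.2.1 d hdD
    have h2 : z < d := (Finset.mem_filter.mp hdB2).2
    exact absurd (lt_of_lt_of_le h2 h1) (lt_irrefl z)
  have hEchain : IsChain (· ≤ ·) ((D ∪ B2 : Finset Q) : Set Q) := by
    intro a ha b hb hab
    simp only [Finset.coe_union, Set.mem_union, Finset.mem_coe] at ha hb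
    rcases ha with ha | ha <;> rcases hb with hb | hb
    · exact hD.2.2 ha hb hab
    · exact Or.inl (le_trans (hD.2.1 a ha) (le_of_lt (Finset.mem_filter.mp hb).2))
    · exact Or.inr (le_trans (hD.2.1 b hb) (le_of_lt (Finset.mem_filter.mp ha).2))
    · exact hM.1 ((hmem a).mp (Finset.mem_filter.mp ha).1)
        ((hmem b).mp (Finset.mem_filter.mp hb).1) hab
  have hEcard : (D ∪ B2).card = hgt z + B2.card := by
    rw [Finset.card_union_of_disjoint hdisj, hDcard]
  have hEle : hgt z + B2.card ≤ r + 1 := by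
    rw [← hEcard]; exact chain_card_le hQ hEchain
  have hzlb : hgt x < hgt z := hgt_strictMono hxz
  refine ⟨z, hxz, ?_, by omega⟩
  intro w hwM hxw
  exact hzle w (Finset.mem_filter.mpr ⟨(hmem w).mpr hwM, hxw⟩)

lemma exists_mid (hQ : IsGradedOfRank Q r) {x y : Q} (hxy : x < y) :
    ∃ z, x < z ∧ z ≤ y ∧ hgt z = hgt x + 1 := by
  have hch : IsChain (· ≤ ·) ({x, y} : Set Q) := by
    intro a ha b hb hab
    simp only [Set.mem_insert_iff, Set.mem_singleton_iff] at ha hb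
    rcases ha with rfl | rfl <;> rcases hb with rfl | rfl
    · exact absurd rfl hab
    · exact Or.inl (le_of_lt hxy)
    · exact Or.inr (le_of_lt hxy)
    · exact absurd rfl hab
  obtain ⟨M, hM, hsub⟩ := hch.exists_maxChain
  have hxM : x ∈ M := hsub (by simp)
  have hyM : y ∈ M := hsub (by simp)
  obtain ⟨z, hxz, hzmin, hzeq⟩ := exists_succ_aux hQ hM hxM ⟨y, hyM, hxy⟩
  exact ⟨z, hxz, hzmin y hyM hxy, hzeq⟩

lemma exists_up (hQ : IsGradedOfRank Q r) {x : Q} (hx : hgt x ≤ r) :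
    ∃ z, x < z ∧ hgt z = hgt x + 1 := by
  classical
  have hch : IsChain (· ≤ ·) ({x} : Set Q) := Set.subsingleton_singleton.isChain
  obtain ⟨M, hM, hsub⟩ := hch.exists_maxChain
  have hxM : x ∈ M := hsub rfl
  have hB : ∃ w ∈ M, x < w := by
    by_contra hno
    push_neg at hno
    have hMfin : M.Finite := Set.toFinite M
    have hchainTo : IsChainTo x hMfin.toFinset := by
      refine ⟨hMfin.mem_toFinset.mpr hxM, ?_, ?_⟩
      · intro w hw
        have hwM : w ∈ M := hMfin.mem_toFinset.mp hw
        rcases eq_or_ne w x with rfl | hne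
        · exact le_rfl
        rcases hM.1 hwM hxM hne with h | h
        · exact h
        · exact absurd (lt_of_le_of_ne h (Ne.symm hne)) (hno w hwM)
      · refine IsChain.mono ?_ hM.1
        intro w hw
        exact hMfin.mem_toFinset.mp hw
    have h1 := le_hgt hchainTo
    rw [← Set.ncard_eq_toFinset_card M hMfin, hQ M hM] at h1
    omega
  obtain ⟨z, hxz, -, hzeq⟩ := exists_succ_aux hQ hM hxM hB
  exact ⟨z, hxz, hzeq⟩

/-- 0/1-valued monotone functions. -/
def V01 (Q : Type*) [PartialOrder Q] : Set (Q → ℝ) :=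
  {g | (∀ x, g x = 0 ∨ g x = 1) ∧ ∀ x y, x ≤ y → g x ≤ g y}

lemma convex_orderPolytope : Convex ℝ (orderPolytope Q) := by
  intro f hf g hg a b ha hb hab
  refine ⟨fun x => ?_, fun x y hxy => ?_⟩
  · have h1 := (hf.1 x).1
    have h2 := (hf.1 x).2
    have h3 := (hg.1 x).1
    have h4 := (hg.1 x).2
    simp only [Pi.add_apply, Pi.smul_apply, smul_eq_mul]
    constructor
    · nlinarith
    · nlinarith
  · have h1 := hf.2 x y hxy
    have h2 := hg.2 x y hxy
    simp only [Pi.add_apply, Pi.smul_apply, smul_eq_mul]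
    nlinarith

lemma V01_subset : V01 Q ⊆ orderPolytope Q := by
  intro g hg
  refine ⟨fun x => ?_, hg.2⟩
  rcases hg.1 x with h | h <;> rw [h] <;> norm_num

lemma mem_V01_of_empty {f : Q → ℝ} (hf : f ∈ orderPolytope Q)
    (h : Set.range f \ {0, 1} = ∅) : f ∈ V01 Q := by
  refine ⟨fun x => ?_, hf.2⟩
  by_contra hc
  push_neg at hc
  have hx : f x ∈ Set.range f \ ({0, 1} : Set ℝ) := by
    refine ⟨Set.mem_range_self x, ?_⟩
    simp only [Set.mem_insert_iff, Set.mem_singleton_iff]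
    push_neg
    exact hc
  rw [h] at hx
  exact hx

lemma toHull : ∀ (n : ℕ) (f : Q → ℝ), f ∈ orderPolytope Q →
    (Set.range f \ {0, 1}).ncard ≤ n → f ∈ convexHull ℝ (V01 Q) := by
  intro n
  induction n with
  | zero =>
    intro f hf hn
    have hfin : (Set.range f \ ({0, 1} : Set ℝ)).Finite :=
      (Set.finite_range f).subset Set.diff_subset
    have : Set.range f \ ({0, 1} : Set ℝ) = ∅ :=
      (Set.ncard_eq_zero hfin).mp (Nat.le_zero.mp hn)
    exact subset_convexHull ℝ _ (mem_V01_of_empty hf this)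
  | succ n ih =>
    intro f hf hn
    set A := Set.range f \ ({0, 1} : Set ℝ) with hA
    have hfin : A.Finite := (Set.finite_range f).subset Set.diff_subset
    rcases A.eq_empty_or_nonempty with hemp | hne
    · exact subset_convexHull ℝ _ (mem_V01_of_empty hf hemp)
    set AF := hfin.toFinset with hAF
    have hAFne : AF.Nonempty := by
      rwa [hAF, Set.Finite.toFinset_nonempty]
    set a := AF.min' hAFne with ha
    have haA : a ∈ A := hfin.mem_toFinset.mp (AF.min'_mem hAFne)
    have hmin : ∀ b ∈ A, a ≤ b := fun b hb => AF.min'_le b (hfin.mem_toFinset.mpr hb)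
    obtain ⟨x₀, hx₀⟩ := haA.1
    have hnot : a ∉ ({0, 1} : Set ℝ) := haA.2
    simp only [Set.mem_insert_iff, Set.mem_singleton_iff, not_or] at hnot
    have ha0 : 0 < a := lt_of_le_of_ne (hx₀ ▸ (hf.1 x₀).1) (Ne.symm hnot.1)
    have ha1 : a < 1 := lt_of_le_of_ne (hx₀ ▸ (hf.1 x₀).2) hnot.2
    have h1a : (0:ℝ) < 1 - a := by linarith
    have hf0 : ∀ x, f x < a → f x = 0 := by
      intro x hx
      by_contra hc
      have h1 : f x ≠ 1 := fun h => by rw [h] at hx; linarith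
      have : f x ∈ A := ⟨Set.mem_range_self x, by
        simp only [Set.mem_insert_iff, Set.mem_singleton_iff, not_or]; exact ⟨hc, h1⟩⟩
      exact absurd (hmin _ this) (not_le_of_gt hx)
    set g : Q → ℝ := fun x => if a ≤ f x then 1 else 0 with hgdef
    have hg : g ∈ V01 Q := by
      constructor
      · intro x
        by_cases hax : a ≤ f x <;> simp [hgdef, hax]
      · intro x y hxy
        simp only [hgdef]
        split_ifs with h1 h2
        · exact le_rfl
        · exact absurd (le_trans h1 (hf.2 x y hxy)) h2
        · norm_num
        · exact le_rfl
    set h : Q → ℝ := fun x => if a ≤ f x then (f x - a) / (1 - a) else 0 with hhdef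
    have hh : h ∈ orderPolytope Q := by
      constructor
      · intro x
        simp only [hhdef]
        split_ifs with hax
        · constructor
          · apply div_nonneg (by linarith) h1a.le
          · rw [div_le_one h1a]
            have := (hf.1 x).2
            linarith
        · norm_num
      · intro x y hxy
        simp only [hhdef]
        split_ifs with h1 h2
        · have := hf.2 x y hxy
          gcongr
        · exact absurd (le_trans h1 (hf.2 x y hxy)) h2
        · apply div_nonneg (by linarith) h1a.le
        · exact le_rfl
    have hsub : Set.range h \ ({0, 1} : Set ℝ) ⊆ (fun b => (b - a) / (1 - a)) '' (A \ {a}) := by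
      rintro t ⟨⟨x, hx⟩, ht⟩
      simp only [Set.mem_insert_iff, Set.mem_singleton_iff, not_or] at ht
      by_cases hax : a ≤ f x
      · have htx : t = (f x - a) / (1 - a) := by rw [← hx]; simp [hhdef, hax]
        have hfa : f x ≠ a := by
          intro h
          rw [htx, h] at ht
          simp at ht
        have hf1 : f x ≠ 1 := by
          intro h
          rw [htx, h] at ht
          rw [div_self (by linarith : (1:ℝ) - a ≠ 0)] at ht
          exact ht.2 rfl
        have hfx0 : f x ≠ 0 := by intro h; rw [h] at hax; linarith
        refine ⟨f x, ⟨⟨Set.mem_range_self x, ?_⟩, hfa⟩, htx.symm⟩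
        simp only [Set.mem_insert_iff, Set.mem_singleton_iff, not_or]
        exact ⟨hfx0, hf1⟩
      · exfalso
        apply ht.1
        rw [← hx]
        simp [hhdef, hax]
    have hcard : (Set.range h \ ({0, 1} : Set ℝ)).ncard ≤ n := by
      have hAfin' : (A \ {a}).Finite := hfin.subset Set.diff_subset
      have h1 : (Set.range h \ ({0, 1} : Set ℝ)).ncard ≤
          ((fun b => (b - a) / (1 - a)) '' (A \ {a})).ncard :=
        Set.ncard_le_ncard hsub (hAfin'.image _)
      have h2 : ((fun b => (b - a) / (1 - a)) '' (A \ {a})).ncard ≤ (A \ {a}).ncard :=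
        Set.ncard_image_le hAfin'
      have h3 : (A \ {a}).ncard = A.ncard - 1 := Set.ncard_diff_singleton_of_mem haA
      have h4 : 1 ≤ A.ncard := (Set.ncard_pos hfin).mpr hne
      omega
    have heq : f = a • g + (1 - a) • h := by
      funext x
      simp only [Pi.add_apply, Pi.smul_apply, smul_eq_mul, hgdef, hhdef]
      split_ifs with hax
      · field_simp
        ring
      · rw [hf0 x (lt_of_not_ge hax)]
        ring
    rw [heq]
    exact (convex_convexHull ℝ (V01 Q)) (subset_convexHull ℝ _ hg) (ih h hh hcard)
      ha0.le h1a.le (by ring)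

lemma orderPolytope_eq_hull : orderPolytope Q = convexHull ℝ (V01 Q) :=
  le_antisymm (fun f hf => toHull _ f hf le_rfl)
    (convexHull_min V01_subset convex_orderPolytope)

/-- The translated dilated order polytope. -/
noncomputable def Pset (Q : Type*) [Fintype Q] [PartialOrder Q] (r : ℕ) : Set (Q → ℝ) :=
  (fun x : Q → ℝ => x - fun i => (hgt i : ℝ)) '' (((r : ℝ) + 2) • orderPolytope Q)

lemma mem_Pset_iff {p : Q → ℝ} : p ∈ Pset Q r ↔
    (∀ x, -(hgt x : ℝ) ≤ p x ∧ p x ≤ (r : ℝ) + 2 - hgt x) ∧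
    (∀ x y, x ≤ y → p x + hgt x ≤ p y + hgt y) := by
  have hr2 : (0:ℝ) < (r : ℝ) + 2 := by positivity
  constructor
  · rintro ⟨w, hw, rfl⟩
    obtain ⟨f, hf, rfl⟩ := hw
    constructor
    · intro x
      have h1 := (hf.1 x).1
      have h2 := (hf.1 x).2
      simp only [Pi.sub_apply, Pi.smul_apply, smul_eq_mul]
      constructor <;> nlinarith
    · intro x y hxy
      have h := hf.2 x y hxy
      simp only [Pi.sub_apply, Pi.smul_apply, smul_eq_mul]
      nlinarith
  · rintro ⟨hb, hm⟩
    have hf : (fun x => (p x + hgt x) / ((r : ℝ) + 2)) ∈ orderPolytope Q := by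
      refine ⟨fun x => ?_, fun x y hxy => ?_⟩
      · constructor
        · apply div_nonneg _ hr2.le
          have := (hb x).1
          linarith
        · rw [div_le_one hr2]
          have := (hb x).2
          linarith
      · have := hm x y hxy
        rw [div_le_div_iff₀ hr2 hr2]
        nlinarith
    have himg := Set.mem_image_of_mem (fun x : Q → ℝ => x - fun i => (hgt i : ℝ))
      (Set.smul_mem_smul_set (a := (r : ℝ) + 2) hf)
    have heq : (fun x : Q → ℝ => x - fun i => (hgt i : ℝ))
        (((r : ℝ) + 2) • fun x => (p x + hgt x) / ((r : ℝ) + 2)) = p := by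
      funext x
      simp only [Pi.sub_apply, Pi.smul_apply, smul_eq_mul]
      field_simp
      ring
    beta_reduce at heq
    rw [heq] at himg
    exact himg

lemma zero_mem_interior_Pset (hQ : IsGradedOfRank Q r) :
    (0 : Q → ℝ) ∈ interior (Pset Q r) := by
  rw [mem_interior]
  refine ⟨Set.pi Set.univ (fun _ : Q => Metric.ball (0 : ℝ) (1/2)), ?_,
    isOpen_set_pi Set.finite_univ (fun i _ => Metric.isOpen_ball), ?_⟩
  · intro u hu
    have hu' : ∀ x : Q, |u x| < 1/2 := by
      intro x
      have := hu x (Set.mem_univ x)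
      rwa [Metric.mem_ball, Real.dist_eq, sub_zero] at this
    rw [mem_Pset_iff]
    constructor
    · intro x
      have h1 : (1 : ℝ) ≤ hgt x := by exact_mod_cast one_le_hgt x
      have h2 : (hgt x : ℝ) ≤ r + 1 := by exact_mod_cast hgt_le hQ x
      have := abs_lt.mp (hu' x)
      constructor <;> linarith [this.1, this.2]
    · intro x y hxy
      rcases eq_or_lt_of_le hxy with rfl | hlt
      · exact le_rfl
      · have h := hgt_strictMono hlt
        have hc : (hgt x : ℝ) + 1 ≤ hgt y := by exact_mod_cast h
        have h1 := abs_lt.mp (hu' x)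
        have h2 := abs_lt.mp (hu' y)
        linarith [h1.2, h2.1]
  · intro x _
    simp

lemma mem_Pset_of_ineqs (hQ : IsGradedOfRank Q r) {g : Q → ℝ}
    (h1 : ∀ x, hgt x = 1 → -1 ≤ g x)
    (h2 : ∀ x, hgt x = r + 1 → g x ≤ 1)
    (h3 : ∀ x y : Q, x ≤ y → hgt y = hgt x + 1 → g x - g y ≤ 1) :
    g ∈ Pset Q r := by
  have B1 : ∀ (n : ℕ) (x : Q), hgt x ≤ n → -(hgt x : ℝ) ≤ g x := by
    intro n
    induction n with
    | zero => intro x hx; exact absurd hx (by have := one_le_hgt x; omega)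
    | succ n ih =>
      intro x hx
      by_cases hone : hgt x = 1
      · have := h1 x hone
        rw [hone]
        push_cast
        linarith
      · have h2' : 2 ≤ hgt x := by have := one_le_hgt x; omega
        obtain ⟨y, hyx, hyh⟩ := exists_down h2'
        have hg := h3 y x hyx.le hyh.symm
        have hy := ih y (by omega)
        have hc : (hgt x : ℝ) = hgt y + 1 := by exact_mod_cast hyh.symm
        rw [hc]
        linarith
  have B2 : ∀ (n : ℕ) (x : Q), r + 1 ≤ hgt x + n → g x ≤ (r : ℝ) + 2 - hgt x := by
    intro n
    induction n with
    | zero =>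
      intro x hx
      have heq : hgt x = r + 1 := by have := hgt_le hQ x; omega
      have := h2 x heq
      rw [heq]
      push_cast
      linarith
    | succ n ih =>
      intro x hx
      by_cases htop : hgt x = r + 1
      · have := h2 x htop
        rw [htop]
        push_cast
        linarith
      · have hxr : hgt x ≤ r := by have := hgt_le hQ x; omega
        obtain ⟨z, hxz, hzh⟩ := exists_up hQ hxr
        have hg := h3 x z hxz.le hzh
        have hz := ih z (by omega)
        have hc : (hgt z : ℝ) = hgt x + 1 := by exact_mod_cast hzh
        rw [hc] at hz
        linarith
  have B3 : ∀ (n : ℕ) (x y : Q), x ≤ y → hgt y ≤ hgt x + n →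
      g x + hgt x ≤ g y + hgt y := by
    intro n
    induction n with
    | zero =>
      intro x y hxy hn
      rcases eq_or_lt_of_le hxy with rfl | hlt
      · exact le_rfl
      · exact absurd (hgt_strictMono hlt) (by omega)
    | succ n ih =>
      intro x y hxy hn
      rcases eq_or_lt_of_le hxy with rfl | hlt
      · exact le_rfl
      · obtain ⟨z, hxz, hzy, hzh⟩ := exists_mid hQ hlt
        have hg := h3 x z hxz.le hzh
        have hc : (hgt z : ℝ) = hgt x + 1 := by exact_mod_cast hzh
        have hrec := ih z y hzy (by omega)
        linarith
  rw [mem_Pset_iff]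
  exact ⟨fun x => ⟨B1 (hgt x) x le_rfl, B2 (r + 1) x (by omega)⟩,
    fun x y hxy => B3 (hgt y) x y hxy (by omega)⟩

lemma image_sub_eq_vadd (s : Set (Q → ℝ)) :
    (fun x : Q → ℝ => x - fun i => (hgt i : ℝ)) '' s
      = (-(fun i : Q => (hgt i : ℝ))) +ᵥ s := by
  ext g
  rw [Set.mem_vadd_set]
  constructor
  · rintro ⟨w, hw, rfl⟩
    exact ⟨w, hw, by funext x; simp [sub_eq_neg_add]⟩
  · rintro ⟨w, hw, rfl⟩
    exact ⟨w, hw, by funext x; simp [sub_eq_neg_add]⟩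

lemma Pset_hull_V01 :
    Pset Q r = convexHull ℝ ((-(fun i : Q => (hgt i : ℝ)))
      +ᵥ (((r : ℝ) + 2) • V01 Q)) := by
  unfold Pset
  rw [orderPolytope_eq_hull, ← convexHull_smul, image_sub_eq_vadd, convexHull_vadd]

lemma isLattice_Pset : ∃ V : Finset (Q → ℤ),
    Pset Q r = convexHull ℝ ((fun v : Q → ℤ => fun i => (v i : ℝ)) '' (V : Set (Q → ℤ))) := by
  classical
  refine ⟨(Finset.univ.filter
      (fun b : Q → Bool => ∀ x y : Q, x ≤ y → b x = true → b y = true)).image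
      (fun b => fun x : Q => ((r : ℤ) + 2) * (if b x then 1 else 0) - (hgt x : ℤ)), ?_⟩
  rw [Pset_hull_V01]
  congr 1
  ext p
  constructor
  · intro hp
    rw [Set.mem_vadd_set] at hp
    obtain ⟨w, hw, rfl⟩ := hp
    obtain ⟨g, hg, rfl⟩ := hw
    set b : Q → Bool := fun x => decide (g x = 1) with hb
    have hbmem : b ∈ Finset.univ.filter
        (fun b : Q → Bool => ∀ x y : Q, x ≤ y → b x = true → b y = true) := by
      rw [Finset.mem_filter]
      refine ⟨Finset.mem_univ b, fun x y hxy hbx => ?_⟩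
      have hgx : g x = 1 := by simpa [hb] using hbx
      have hmono := hg.2 x y hxy
      rcases hg.1 y with h | h
      · rw [hgx, h] at hmono; norm_num at hmono
      · simp [hb, h]
    refine ⟨(fun x : Q => ((r : ℤ) + 2) * (if b x then 1 else 0) - (hgt x : ℤ)),
      Finset.mem_coe.mpr (Finset.mem_image_of_mem _ hbmem), ?_⟩
    funext x
    by_cases hbx : b x
    · have hgx : g x = 1 := by simpa [hb] using hbx
      simp only [hbx, if_true, vadd_eq_add, Pi.add_apply, Pi.neg_apply, Pi.smul_apply,
        smul_eq_mul, hgx]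
      push_cast
      ring
    · have hgx : g x = 0 := by
        rcases hg.1 x with h | h
        · exact h
        · exact absurd (by simp [hb, h]) hbx
      simp only [hbx, if_false, vadd_eq_add, Pi.add_apply, Pi.neg_apply, Pi.smul_apply,
        smul_eq_mul, hgx]
      push_cast
      ring
  · intro hp
    obtain ⟨w, hw, rfl⟩ := hp
    rw [Finset.mem_coe, Finset.mem_image] at hw
    obtain ⟨b, hb, rfl⟩ := hw
    rw [Finset.mem_filter] at hb
    set g : Q → ℝ := fun x => if b x then 1 else 0 with hg
    have hgV : g ∈ V01 Q := by
      constructor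
      · intro x
        by_cases hbx : b x <;> simp [hg, hbx]
      · intro x y hxy
        simp only [hg]
        split_ifs with h1 h2
        · exact le_rfl
        · exact absurd (hb.2 x y hxy h1) h2
        · norm_num
        · exact le_rfl
    rw [Set.mem_vadd_set]
    refine ⟨((r : ℝ) + 2) • g, Set.smul_mem_smul_set hgV, ?_⟩
    funext x
    by_cases hbx : b x <;>
      simp only [vadd_eq_add, Pi.add_apply, Pi.neg_apply, Pi.smul_apply, smul_eq_mul,
        hg, hbx, if_true, if_false] <;> push_cast <;> ring

lemma sum_cast_single [DecidableEq Q] (x : Q) (w : Q → ℝ) :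
    ∑ i, (((Pi.single x (1 : ℤ) : Q → ℤ) i : ℤ) : ℝ) * w i = w x := by
  rw [Finset.sum_eq_single x]
  · simp
  · intro b _ hbx
    rw [Pi.single_eq_of_ne hbx]
    simp
  · intro h
    exact absurd (Finset.mem_univ x) h

lemma convex_dual (P : Set (Q → ℝ)) :
    Convex ℝ {u : Q → ℝ | ∀ w ∈ P, ∑ i, u i * w i ≤ 1} := by
  intro u hu v hv a b ha hb hab
  intro w hw
  have h1 := hu w hw
  have h2 := hv w hw
  have : ∑ i, (a • u + b • v) i * w i
      = a * ∑ i, u i * w i + b * ∑ i, v i * w i := by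
    rw [Finset.mul_sum, Finset.mul_sum, ← Finset.sum_add_distrib]
    congr 1
    funext i
    simp only [Pi.add_apply, Pi.smul_apply, smul_eq_mul]
    ring
  rw [this]
  nlinarith

lemma isLattice_dual (hQ : IsGradedOfRank Q r) :
    ∃ V : Finset (Q → ℤ), {u : Q → ℝ | ∀ w ∈ Pset Q r, ∑ i, u i * w i ≤ 1}
      = convexHull ℝ ((fun v : Q → ℤ => fun i => (v i : ℝ)) '' (V : Set (Q → ℤ))) := by
  classical
  set S : Finset (Q → ℤ) :=
    (({(0 : Q → ℤ)} ∪ (Finset.univ.filter (fun x : Q => hgt x = 1)).image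
        (fun x => -Pi.single x 1)) ∪
      (Finset.univ.filter (fun x : Q => hgt x = r + 1)).image (fun x => Pi.single x 1)) ∪
      ((Finset.univ ×ˢ Finset.univ).filter
        (fun p : Q × Q => p.1 ≤ p.2 ∧ hgt p.2 = hgt p.1 + 1)).image
        (fun p => Pi.single p.1 1 - Pi.single p.2 1) with hS
  refine ⟨S, ?_⟩
  set A : Set (Q → ℝ) := (fun v : Q → ℤ => fun i => (v i : ℝ)) '' (S : Set (Q → ℤ)) with hA
  apply le_antisymm
  · -- dual ⊆ convexHull A, by separation
    intro u hu
    by_contra hnot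
    have hAfin : A.Finite := (S.finite_toSet).image _
    have hclosed : IsClosed (convexHull ℝ A) := (hAfin.isCompact_convexHull ℝ).isClosed
    obtain ⟨f, c, hfa, hfu⟩ :=
      geometric_hahn_banach_closed_point (convex_convexHull ℝ A) hclosed hnot
    have h0S : (0 : Q → ℤ) ∈ S := by
      rw [hS]
      apply Finset.mem_union_left
      apply Finset.mem_union_left
      apply Finset.mem_union_left
      exact Finset.mem_singleton_self _
    have h0A : (0 : Q → ℝ) ∈ A := ⟨0, Finset.mem_coe.mpr h0S, by funext i; simp⟩
    have hc0 : (0 : ℝ) < c := by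
      have := hfa 0 (subset_convexHull ℝ A h0A)
      rwa [map_zero] at this
    set gv : Q → ℝ := fun i => f (fun j => if i = j then (1 : ℝ) else 0) with hgv
    have hfw : ∀ w : Q → ℝ, f w = ∑ i, w i * gv i := by
      intro w
      conv_lhs => rw [pi_eq_sum_univ w]
      rw [map_sum]
      congr 1
      funext i
      rw [_root_.map_smul]
      simp [hgv, smul_eq_mul]
    -- single-element evaluation lemmas
    have hcast_single : ∀ x : Q, (fun i => ((Pi.single x (1:ℤ) : Q → ℤ) i : ℝ))
        = (fun j => if x = j then (1:ℝ) else 0) := by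
      intro x
      funext j
      rcases eq_or_ne j x with rfl | hne
      · simp
      · rw [Pi.single_eq_of_ne hne]
        simp [Ne.symm hne]
    have hmin : ∀ x : Q, hgt x = 1 → -gv x < c := by
      intro x hx
      have hmem : (-Pi.single x 1 : Q → ℤ) ∈ S := by
        rw [hS]
        apply Finset.mem_union_left
        apply Finset.mem_union_left
        apply Finset.mem_union_right
        exact Finset.mem_image_of_mem _ (Finset.mem_filter.mpr ⟨Finset.mem_univ x, hx⟩)
      have hmemA : (fun i => ((-Pi.single x 1 : Q → ℤ) i : ℝ)) ∈ A :=
        ⟨_, Finset.mem_coe.mpr hmem, rfl⟩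
      have := hfa _ (subset_convexHull ℝ A hmemA)
      have heq : (fun i => ((-Pi.single x 1 : Q → ℤ) i : ℝ))
          = -(fun j => if x = j then (1:ℝ) else 0) := by
        rw [← hcast_single x]
        funext j
        simp
      rw [heq, map_neg] at this
      exact this
    have hmax : ∀ x : Q, hgt x = r + 1 → gv x < c := by
      intro x hx
      have hmem : (Pi.single x 1 : Q → ℤ) ∈ S := by
        rw [hS]
        apply Finset.mem_union_left
        apply Finset.mem_union_right
        exact Finset.mem_image_of_mem _ (Finset.mem_filter.mpr ⟨Finset.mem_univ x, hx⟩)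
      have hmemA : (fun i => ((Pi.single x 1 : Q → ℤ) i : ℝ)) ∈ A :=
        ⟨_, Finset.mem_coe.mpr hmem, rfl⟩
      have := hfa _ (subset_convexHull ℝ A hmemA)
      rwa [hcast_single x] at this
    have hpair : ∀ x y : Q, x ≤ y → hgt y = hgt x + 1 → gv x - gv y < c := by
      intro x y hxy hxyh
      have hmem : (Pi.single x 1 - Pi.single y 1 : Q → ℤ) ∈ S := by
        rw [hS]
        apply Finset.mem_union_right
        refine Finset.mem_image.mpr ⟨(x, y), ?_, rfl⟩
        exact Finset.mem_filter.mpr ⟨by simp, hxy, hxyh⟩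
      have hmemA : (fun i => ((Pi.single x 1 - Pi.single y 1 : Q → ℤ) i : ℝ)) ∈ A :=
        ⟨_, Finset.mem_coe.mpr hmem, rfl⟩
      have := hfa _ (subset_convexHull ℝ A hmemA)
      have heq : (fun i => ((Pi.single x 1 - Pi.single y 1 : Q → ℤ) i : ℝ))
          = (fun j => if x = j then (1:ℝ) else 0) - (fun j => if y = j then (1:ℝ) else 0) := by
        rw [← hcast_single x, ← hcast_single y]
        funext j
        simp
      rw [heq, map_sub] at this
      exact this
    set g : Q → ℝ := fun i => gv i / c with hg
    have hgP : g ∈ Pset Q r := by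
      apply mem_Pset_of_ineqs hQ
      · intro x hx
        have := hmin x hx
        rw [hg]
        rw [le_div_iff₀ hc0]
        linarith
      · intro x hx
        have := hmax x hx
        rw [hg, div_le_one hc0]
        linarith
      · intro x y hxy hxyh
        have := hpair x y hxy hxyh
        rw [hg, div_sub_div_same, div_le_one hc0]
        linarith
    have hle := hu g hgP
    have hsum : ∑ i, u i * g i = f u / c := by
      rw [hfw u, Finset.sum_div]
      congr 1
      funext i
      rw [hg]
      ring
    rw [hsum] at hle
    rw [div_le_one hc0] at hle
    linarith
  · -- convexHull A ⊆ dual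
    apply convexHull_min _ (convex_dual _)
    rintro a ⟨s, hsS, rfl⟩ w hw
    rw [Finset.mem_coe, hS] at hsS
    rw [mem_Pset_iff] at hw
    obtain ⟨hb, hm⟩ := hw
    rcases Finset.mem_union.mp hsS with hs | hs
    · rcases Finset.mem_union.mp hs with hs | hs
      · rcases Finset.mem_union.mp hs with hs | hs
        · -- zero
          rw [Finset.mem_singleton.mp hs]
          simp
        · -- minimal
          obtain ⟨x, hxf, rfl⟩ := Finset.mem_image.mp hs
          have hx : hgt x = 1 := (Finset.mem_filter.mp hxf).2
          have hsum : ∑ i, ((-Pi.single x 1 : Q → ℤ) i : ℝ) * w i = -w x := by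
            rw [← sum_cast_single x w, ← Finset.sum_neg_distrib]
            congr 1
            funext i
            simp only [Pi.neg_apply, Pi.sub_apply]
            push_cast
            ring
          rw [hsum]
          have := (hb x).1
          rw [hx] at this
          push_cast at this
          linarith
      · -- maximal
        obtain ⟨x, hxf, rfl⟩ := Finset.mem_image.mp hs
        have hx : hgt x = r + 1 := (Finset.mem_filter.mp hxf).2
        rw [sum_cast_single x w]
        have := (hb x).2
        rw [hx] at this
        push_cast at this
        linarith
    · -- cover pair
      obtain ⟨⟨x, y⟩, hxyf, rfl⟩ := Finset.mem_image.mp hs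
      obtain ⟨-, hxy, hxyh⟩ := Finset.mem_filter.mp hxyf
      have hsum : ∑ i, ((Pi.single x 1 - Pi.single y 1 : Q → ℤ) i : ℝ) * w i
          = w x - w y := by
        rw [← sum_cast_single x w, ← sum_cast_single y w, ← Finset.sum_sub_distrib]
        congr 1
        funext i
        simp only [Pi.neg_apply, Pi.sub_apply]
        push_cast
        ring
      rw [hsum]
      have := hm x y hxy
      have hc : (hgt y : ℝ) = hgt x + 1 := by exact_mod_cast hxyh
      linarith

end Aux

/-- Let `Q` be a finite graded poset of rank `r` with `|Q| = d`. Then the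
dilation `(r+2)·𝒪(Q)` of the order polytope of `Q` is a lattice translate of a reflexive
polytope: there is a lattice point `v ∈ ℤ^Q` with `(r+2)·𝒪(Q) - v` reflexive. -/
theorem dilated_order_polytope_reflexive (Q : Type*) [Fintype Q] [PartialOrder Q]
    (r : ℕ) (hQ : IsGradedOfRank Q r) :
    ∃ v : Q → ℤ,
      IsReflexive ((fun x : Q → ℝ => x - fun i => (v i : ℝ)) ''
        (((r : ℝ) + 2) • orderPolytope Q)) := by
  classical
  refine ⟨fun x => (hgt x : ℤ), ?_⟩
  have hQ' : IsGradedOfRank Q r := hQ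
  have hP : ((fun x : Q → ℝ => x - fun i => (((fun x : Q => (hgt x : ℤ)) i : ℤ) : ℝ)) ''
      (((r : ℝ) + 2) • orderPolytope Q)) = Pset Q r := by
    have hcastfun : (fun i : Q => (((fun x : Q => (hgt x : ℤ)) i : ℤ) : ℝ))
        = (fun i : Q => (hgt i : ℝ)) := by
      funext i
      push_cast
      rfl
    rw [hcastfun]
    rfl
  rw [hP]
  exact ⟨isLattice_Pset, zero_mem_interior_Pset hQ', isLattice_dual hQ'⟩
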